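/- Define T : ℝ³ × ℝ³ × ℝ³ × ℝ³ → ℂ by T(p⁽¹⁾, θ⁽¹⁾, p⁽²⁾, θ⁽²⁾) = (1/2)·tr( exp(−(i/2)(θ⁽²⁾·σ)) · exp((i/2)(θ⁽¹⁾·σ)) · exp((1/2)(p⁽¹⁾·σ)) · exp((1/2)(p⁽²⁾·σ)) ). Then for all real p and θ, at the point p⁽¹⁾ = p⁽²⁾ = (0,0,p) and θ⁽¹⁾ = θ⁽²⁾ = (0,0,θ), the partial derivatives of T satisfy: ∂T/∂p⁽¹⁾ⱼ = ∂T/∂p⁽²⁾ⱼ = (1/2)·sinh(p) if j = 3 and 0 if j ∈ {1,2}, and ∂T/∂θ⁽¹⁾ⱼ = −∂T/∂θ⁽²⁾ⱼ = (i/2)·sinh(p) if j = 3 and 0 if j ∈ {1,2}. -/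

import Mathlib

open Matrix

/-- For `v ∈ ℝ³`, the matrix `v·σ = v₁σ₁ + v₂σ₂ + v₃σ₃` built from the Pauli matrices. -/
noncomputable def pauliDot (v : EuclideanSpace ℝ (Fin 3)) : Matrix (Fin 2) (Fin 2) ℂ :=
  (v 0 : ℂ) • !![0, 1; 1, 0] +
  (v 1 : ℂ) • !![0, -Complex.I; Complex.I, 0] +
  (v 2 : ℂ) • !![1, 0; 0, -1]

/-- The function
`T(p⁽¹⁾, θ⁽¹⁾, p⁽²⁾, θ⁽²⁾) = (1/2)·tr(exp(−(i/2)θ⁽²⁾·σ)·exp((i/2)θ⁽¹⁾·σ)·exp((1/2)p⁽¹⁾·σ)·exp((1/2)p⁽²⁾·σ))`. -/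
noncomputable def Tfun (p₁ θ₁ p₂ θ₂ : EuclideanSpace ℝ (Fin 3)) : ℂ :=
  (1/2 : ℂ) *
    (NormedSpace.exp (-(Complex.I/2) • pauliDot θ₂) *
      NormedSpace.exp ((Complex.I/2) • pauliDot θ₁) *
      NormedSpace.exp ((1/2 : ℂ) • pauliDot p₁) *
      NormedSpace.exp ((1/2 : ℂ) • pauliDot p₂)).trace

namespace Statement8Aux

/-- σ₃, used to conjugate. -/
noncomputable def S : Matrix (Fin 2) (Fin 2) ℂ := !![1,0;0,-1]

lemma S_mul_S : S * S = 1 := by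
  simp [S]
  rw [← Matrix.one_fin_two]

/-- σ₃ as a unit. -/
noncomputable def Su : (Matrix (Fin 2) (Fin 2) ℂ)ˣ := ⟨S, S, S_mul_S, S_mul_S⟩

/-- Negate the first two coordinates. -/
noncomputable def flip (v : EuclideanSpace ℝ (Fin 3)) : EuclideanSpace ℝ (Fin 3) :=
  (WithLp.equiv 2 _).symm ![-(v 0), -(v 1), v 2]

lemma pauliDot_flip (v : EuclideanSpace ℝ (Fin 3)) :
    pauliDot (flip v) = S * pauliDot v * S := by
  ext i j
  fin_cases i <;> fin_cases j <;>
    simp [pauliDot, flip, S, Matrix.mul_apply, Fin.sum_univ_two] <;> ring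

lemma exp_flip (z : ℂ) (v : EuclideanSpace ℝ (Fin 3)) :
    NormedSpace.exp (z • pauliDot (flip v)) =
      S * NormedSpace.exp (z • pauliDot v) * S := by
  have h : z • pauliDot (flip v) = (Su : Matrix (Fin 2) (Fin 2) ℂ) * (z • pauliDot v) *
      ((Su⁻¹ : _ˣ) : Matrix (Fin 2) (Fin 2) ℂ) := by
    rw [pauliDot_flip]
    show _ = S * (z • pauliDot v) * S
    rw [Matrix.mul_smul, Matrix.smul_mul]
  rw [h, Matrix.exp_units_conj]
  rfl

lemma Tfun_flip (a b c d : EuclideanSpace ℝ (Fin 3)) :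
    Tfun (flip a) (flip b) (flip c) (flip d) = Tfun a b c d := by
  unfold Tfun
  rw [exp_flip, exp_flip, exp_flip, exp_flip]
  congr 1
  have hS : ∀ X : Matrix (Fin 2) (Fin 2) ℂ, S * (S * X) = X := fun X => by
    rw [← Matrix.mul_assoc, S_mul_S, Matrix.one_mul]
  have key : (S * NormedSpace.exp (-(Complex.I/2) • pauliDot d) * S) *
      (S * NormedSpace.exp ((Complex.I/2) • pauliDot b) * S) *
      (S * NormedSpace.exp ((1/2:ℂ) • pauliDot a) * S) *
      (S * NormedSpace.exp ((1/2:ℂ) • pauliDot c) * S) =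
      S * (NormedSpace.exp (-(Complex.I/2) • pauliDot d) *
        NormedSpace.exp ((Complex.I/2) • pauliDot b) *
        NormedSpace.exp ((1/2:ℂ) • pauliDot a) *
        NormedSpace.exp ((1/2:ℂ) • pauliDot c)) * S := by
    simp only [Matrix.mul_assoc, hS]
  rw [key, Matrix.trace_mul_cycle, ← Matrix.mul_assoc, S_mul_S, Matrix.one_mul]

lemma single_comb (c s : ℝ) (j : Fin 3) :
    EuclideanSpace.single j c + s • EuclideanSpace.single j (1:ℝ) =
      EuclideanSpace.single j (c + s) := by
  ext i
  by_cases h : i = j <;> simp [EuclideanSpace.single_apply, h]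

lemma flip_pert (c s : ℝ) (j : Fin 3) (hj : j ≠ 2) :
    flip (EuclideanSpace.single 2 c + s • EuclideanSpace.single j 1) =
    EuclideanSpace.single 2 c + (-s) • EuclideanSpace.single j 1 := by
  ext i
  fin_cases j
  · fin_cases i <;> simp [flip, EuclideanSpace.single_apply]
  · fin_cases i <;> simp [flip, EuclideanSpace.single_apply]
  · exact absurd rfl hj

lemma flip_single2 (c : ℝ) :
    flip (EuclideanSpace.single 2 c) = EuclideanSpace.single 2 c := by
  ext i
  fin_cases i <;> simp [flip, EuclideanSpace.single_apply]

lemma pauliDot_single2 (c : ℝ) :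
    pauliDot (EuclideanSpace.single 2 c) = Matrix.diagonal ![(c:ℂ), -c] := by
  ext i j
  fin_cases i <;> fin_cases j <;>
    simp [pauliDot, EuclideanSpace.single_apply, Matrix.diagonal]

lemma exp_z_single (z : ℂ) (c : ℝ) :
    NormedSpace.exp (z • pauliDot (EuclideanSpace.single 2 c)) =
      Matrix.diagonal ![Complex.exp (z*c), Complex.exp (-(z*c))] := by
  rw [pauliDot_single2]
  have h : z • (Matrix.diagonal ![(c:ℂ), -c]) = Matrix.diagonal ![z*c, -(z*c)] := by
    ext i j
    fin_cases i <;> fin_cases j <;> simp [Matrix.diagonal, mul_comm]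
  rw [h, Matrix.exp_diagonal]
  ext i j
  fin_cases i <;> fin_cases j <;>
    simp [Matrix.diagonal, Pi.coe_exp, ← Complex.exp_eq_exp_ℂ]

lemma Tfun_singles (a b c d : ℝ) :
    Tfun (EuclideanSpace.single 2 a) (EuclideanSpace.single 2 b)
      (EuclideanSpace.single 2 c) (EuclideanSpace.single 2 d) =
    (1/2) * (Complex.exp (((a:ℂ)+c)/2 + Complex.I*((b:ℂ)-d)/2) +
      Complex.exp (-(((a:ℂ)+c)/2 + Complex.I*((b:ℂ)-d)/2))) := by
  unfold Tfun
  rw [exp_z_single, exp_z_single, exp_z_single, exp_z_single,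
    Matrix.diagonal_mul_diagonal, Matrix.diagonal_mul_diagonal,
    Matrix.diagonal_mul_diagonal, Matrix.trace_diagonal]
  simp only [Fin.sum_univ_two, Pi.mul_apply, Matrix.cons_val_zero, Matrix.cons_val_one,
    Matrix.head_cons, ← Complex.exp_add]
  congr 3 <;> ring

lemma hasDeriv_expAffine (z w : ℂ) :
    HasDerivAt (fun s : ℝ => Complex.exp ((s:ℂ) * z + w)) (z * Complex.exp w) 0 := by
  have h : HasDerivAt (fun u : ℂ => Complex.exp (u * z + w))
      (Complex.exp ((0:ℂ) * z + w) * (1 * z)) (0:ℂ) :=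
    (((hasDerivAt_id (0:ℂ)).mul_const z).add_const w).cexp
  have h2 : HasDerivAt (fun s : ℝ => Complex.exp ((s:ℂ) * z + w))
      (Complex.exp ((0:ℂ) * z + w) * (1 * z)) (0:ℝ) :=
    HasDerivAt.comp_ofReal (e := fun u : ℂ => Complex.exp (u * z + w)) (by simpa using h)
  simpa [mul_comm] using h2

lemma even_deriv_zero {g : ℝ → ℂ} (h : ∀ s, g (-s) = g s) : deriv g 0 = 0 := by
  have h1 : deriv (fun x : ℝ => g (-x)) 0 = -deriv g (-0) := deriv_comp_neg g 0
  have h2 : (fun x : ℝ => g (-x)) = g := funext h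
  rw [h2, neg_zero] at h1
  have : (2:ℂ) * deriv g 0 = 0 := by linear_combination h1
  simpa using this

lemma deriv_main (z w : ℂ) :
    deriv (fun s : ℝ => (1/2 : ℂ) *
      (Complex.exp ((s:ℂ) * z + w) + Complex.exp ((s:ℂ) * (-z) + (-w)))) 0 =
    z * (Complex.exp w - Complex.exp (-w)) / 2 := by
  have h := ((hasDeriv_expAffine z w).add (hasDeriv_expAffine (-z) (-w))).const_mul (1/2 : ℂ)
  refine h.deriv.trans ?_
  ring

end Statement8Aux

open Statement8Aux in
/-- At the point `p⁽¹⁾ = p⁽²⁾ = (0,0,p)`, `θ⁽¹⁾ = θ⁽²⁾ = (0,0,θ)`, the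
partial derivatives of `T` are: `∂T/∂p⁽¹⁾ⱼ = ∂T/∂p⁽²⁾ⱼ = (1/2)sinh p` if `j = 3` and `0`
otherwise, and `∂T/∂θ⁽¹⁾ⱼ = −∂T/∂θ⁽²⁾ⱼ = (i/2)sinh p` if `j = 3` and `0` otherwise. -/
theorem statement8 (p θ : ℝ) :
    (∀ j : Fin 3,
      deriv (fun s : ℝ =>
          Tfun (EuclideanSpace.single (2 : Fin 3) p + s • EuclideanSpace.single j (1 : ℝ))
            (EuclideanSpace.single (2 : Fin 3) θ)
            (EuclideanSpace.single (2 : Fin 3) p)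
            (EuclideanSpace.single (2 : Fin 3) θ)) 0 =
        if j = 2 then ((Real.sinh p / 2 : ℝ) : ℂ) else 0) ∧
    (∀ j : Fin 3,
      deriv (fun s : ℝ =>
          Tfun (EuclideanSpace.single (2 : Fin 3) p)
            (EuclideanSpace.single (2 : Fin 3) θ)
            (EuclideanSpace.single (2 : Fin 3) p + s • EuclideanSpace.single j (1 : ℝ))
            (EuclideanSpace.single (2 : Fin 3) θ)) 0 =
        if j = 2 then ((Real.sinh p / 2 : ℝ) : ℂ) else 0) ∧
    (∀ j : Fin 3,
      deriv (fun s : ℝ =>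
          Tfun (EuclideanSpace.single (2 : Fin 3) p)
            (EuclideanSpace.single (2 : Fin 3) θ + s • EuclideanSpace.single j (1 : ℝ))
            (EuclideanSpace.single (2 : Fin 3) p)
            (EuclideanSpace.single (2 : Fin 3) θ)) 0 =
        if j = 2 then (Complex.I / 2) * (Real.sinh p : ℂ) else 0) ∧
    (∀ j : Fin 3,
      deriv (fun s : ℝ =>
          Tfun (EuclideanSpace.single (2 : Fin 3) p)
            (EuclideanSpace.single (2 : Fin 3) θ)
            (EuclideanSpace.single (2 : Fin 3) p)
            (EuclideanSpace.single (2 : Fin 3) θ + s • EuclideanSpace.single j (1 : ℝ))) 0 =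
        if j = 2 then -((Complex.I / 2) * (Real.sinh p : ℂ)) else 0) := by
  refine ⟨?_, ?_, ?_, ?_⟩
  · intro j
    by_cases hj : j = (2 : Fin 3)
    · subst hj
      rw [if_pos rfl]
      have hfun : (fun s : ℝ =>
          Tfun (EuclideanSpace.single 2 p + s • EuclideanSpace.single 2 (1:ℝ)) (EuclideanSpace.single 2 θ)
            (EuclideanSpace.single 2 p) (EuclideanSpace.single 2 θ)) =
          fun s : ℝ => (1/2 : ℂ) *
            (Complex.exp ((s:ℂ) * (1/2) + (p:ℂ)) +
             Complex.exp ((s:ℂ) * (-(1/2)) + (-(p:ℂ)))) := by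
        funext s
        rw [single_comb, Tfun_singles]
        push_cast
        ring_nf
      rw [hfun, deriv_main]
      rw [Real.sinh_eq]
      push_cast [Complex.ofReal_exp]
      ring
    · rw [if_neg hj]
      apply even_deriv_zero
      intro s
      have h := Tfun_flip (EuclideanSpace.single 2 p + s • EuclideanSpace.single j 1) (EuclideanSpace.single 2 θ)
        (EuclideanSpace.single 2 p) (EuclideanSpace.single 2 θ)
      rw [flip_pert _ _ _ hj] at h
      simp only [flip_single2] at h
      exact h
  · intro j
    by_cases hj : j = (2 : Fin 3)
    · subst hj
      rw [if_pos rfl]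
      have hfun : (fun s : ℝ =>
          Tfun (EuclideanSpace.single 2 p) (EuclideanSpace.single 2 θ)
            (EuclideanSpace.single 2 p + s • EuclideanSpace.single 2 (1:ℝ)) (EuclideanSpace.single 2 θ)) =
          fun s : ℝ => (1/2 : ℂ) *
            (Complex.exp ((s:ℂ) * (1/2) + (p:ℂ)) +
             Complex.exp ((s:ℂ) * (-(1/2)) + (-(p:ℂ)))) := by
        funext s
        rw [single_comb, Tfun_singles]
        push_cast
        ring_nf
      rw [hfun, deriv_main]
      rw [Real.sinh_eq]
      push_cast [Complex.ofReal_exp]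
      ring
    · rw [if_neg hj]
      apply even_deriv_zero
      intro s
      have h := Tfun_flip (EuclideanSpace.single 2 p) (EuclideanSpace.single 2 θ)
        (EuclideanSpace.single 2 p + s • EuclideanSpace.single j 1) (EuclideanSpace.single 2 θ)
      rw [flip_pert _ _ _ hj] at h
      simp only [flip_single2] at h
      exact h
  · intro j
    by_cases hj : j = (2 : Fin 3)
    · subst hj
      rw [if_pos rfl]
      have hfun : (fun s : ℝ =>
          Tfun (EuclideanSpace.single 2 p) (EuclideanSpace.single 2 θ + s • EuclideanSpace.single 2 (1:ℝ))
            (EuclideanSpace.single 2 p) (EuclideanSpace.single 2 θ)) =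
          fun s : ℝ => (1/2 : ℂ) *
            (Complex.exp ((s:ℂ) * (Complex.I/2) + (p:ℂ)) +
             Complex.exp ((s:ℂ) * (-(Complex.I/2)) + (-(p:ℂ)))) := by
        funext s
        rw [single_comb, Tfun_singles]
        push_cast
        ring_nf
      rw [hfun, deriv_main]
      rw [Real.sinh_eq]
      push_cast [Complex.ofReal_exp]
      ring
    · rw [if_neg hj]
      apply even_deriv_zero
      intro s
      have h := Tfun_flip (EuclideanSpace.single 2 p) (EuclideanSpace.single 2 θ + s • EuclideanSpace.single j 1)
        (EuclideanSpace.single 2 p) (EuclideanSpace.single 2 θ)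
      rw [flip_pert _ _ _ hj] at h
      simp only [flip_single2] at h
      exact h
  · intro j
    by_cases hj : j = (2 : Fin 3)
    · subst hj
      rw [if_pos rfl]
      have hfun : (fun s : ℝ =>
          Tfun (EuclideanSpace.single 2 p) (EuclideanSpace.single 2 θ)
            (EuclideanSpace.single 2 p) (EuclideanSpace.single 2 θ + s • EuclideanSpace.single 2 (1:ℝ))) =
          fun s : ℝ => (1/2 : ℂ) *
            (Complex.exp ((s:ℂ) * (-(Complex.I/2)) + (p:ℂ)) +
             Complex.exp ((s:ℂ) * (-(-(Complex.I/2))) + (-(p:ℂ)))) := by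
        funext s
        rw [single_comb, Tfun_singles]
        push_cast
        ring_nf
      rw [hfun, deriv_main]
      rw [Real.sinh_eq]
      push_cast [Complex.ofReal_exp]
      ring
    · rw [if_neg hj]
      apply even_deriv_zero
      intro s
      have h := Tfun_flip (EuclideanSpace.single 2 p) (EuclideanSpace.single 2 θ)
        (EuclideanSpace.single 2 p) (EuclideanSpace.single 2 θ + s • EuclideanSpace.single j 1)
      rw [flip_pert _ _ _ hj] at h
      simp only [flip_single2] at h
      exact h
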